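/- With W the ℚ(q^{1/2})-span of |m⟩, m ∈ ℤ_{≥0}^n, and the bilinear form (|m⟩,|m'⟩) = δ_{m,m'} q^{-(1/2)Σ m_i(m_i-1)}/∏[m_i]!, define e_n|m⟩ = -q^{1/2}|m - e_n⟩, f_n|m⟩ = q^{-1/2}[m_n+1]|m + e_n⟩, k_n|m⟩ = q^{-m_n - 1/2}|m⟩. Then (e_n v, v') = (v, -q^{-1/2}k_n^{-1}f_n v') for all basis vectors v, v'. -/

import Mathlib

/- The field ℚ(q^{1/2}): we realize it as the rational function field in the
indeterminate `t = q^{1/2}`, so that `q = t²`. -/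
noncomputable abbrev Kq : Type := RatFunc ℚ
noncomputable abbrev sqrtq : Kq := RatFunc.X   -- `q^{1/2}`
noncomputable abbrev q : Kq := sqrtq ^ 2        -- `q`

/-- The balanced q-integer `[m] = (q^m - q^{-m})/(q - q^{-1})`. -/
noncomputable def qInt (m : ℕ) : Kq :=
  (q ^ m - q⁻¹ ^ m) / (q - q⁻¹)

/-- The q-factorial `[m]!`. -/
noncomputable def qFac (m : ℕ) : Kq :=
  ∏ k ∈ Finset.range m, qInt (k + 1)

/-- The ℚ(q^{1/2})-vector space `W` with basis `|m⟩`, `m ∈ ℤ_{≥0}^n`. -/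
noncomputable abbrev W (n : ℕ) : Type := (Fin n → ℕ) →₀ Kq

/-- The basis vector `|m⟩`. -/
noncomputable def ket {n : ℕ} (m : Fin n → ℕ) : W n := Finsupp.single m 1

/-- Extension of a map defined on basis vectors to an operator on `W`. -/
noncomputable def opOf {n : ℕ} (g : (Fin n → ℕ) → W n) : W n → W n :=
  fun v => v.sum fun m c => c • g m

/-- The symmetric bilinear form
`(|m⟩,|m'⟩) = δ_{m,m'} q^{-(1/2)Σ_i m_i(m_i-1)} / ∏_i [m_i]!`. -/
noncomputable def bform {n : ℕ} (v v' : W n) : Kq :=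
  v.sum fun m c =>
    c * v' m * (q ^ (-(((∑ i, m i * (m i - 1)) / 2 : ℕ) : ℤ)) * (∏ i, qFac (m i))⁻¹)

/-- `e_n |m⟩ = -q^{1/2} |m - e_n⟩` (zero if `m_n = 0`). -/
noncomputable def eN {n : ℕ} (ln : Fin n) : W n → W n :=
  opOf fun m =>
    if m ln = 0 then 0 else (-sqrtq) • ket (Function.update m ln (m ln - 1))

/-- `f_n |m⟩ = q^{-1/2}[m_n+1] |m + e_n⟩`. -/
noncomputable def fN {n : ℕ} (ln : Fin n) : W n → W n :=
  opOf fun m => (sqrtq⁻¹ * qInt (m ln + 1)) • ket (Function.update m ln (m ln + 1))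

/-- `k_n⁻¹ |m⟩ = q^{m_n + 1/2} |m⟩` (since `k_n |m⟩ = q^{-m_n-1/2}|m⟩`). -/
noncomputable def kInvN {n : ℕ} (ln : Fin n) : W n → W n :=
  opOf fun m => (sqrtq ^ (2 * m ln + 1)) • ket m



lemma sqrtq_ne_zero : (sqrtq : Kq) ≠ 0 := RatFunc.X_ne_zero

lemma sqrtq_pow_ne_one {k : ℕ} (hk : k ≠ 0) : (sqrtq : Kq) ^ k ≠ 1 := by
  intro h
  have : (algebraMap (Polynomial ℚ) Kq) (Polynomial.X ^ k) = algebraMap (Polynomial ℚ) Kq 1 := by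
    simpa [map_pow, RatFunc.algebraMap_X] using h
  have := RatFunc.algebraMap_injective ℚ this
  have hd := congrArg Polynomial.natDegree this
  simp [Polynomial.natDegree_X_pow] at hd
  exact hk hd

lemma q_ne_zero : (q : Kq) ≠ 0 := pow_ne_zero _ sqrtq_ne_zero

lemma q_sub_qinv_ne_zero : (q : Kq) - q⁻¹ ≠ 0 := by
  intro h
  have h1 : (q : Kq) = q⁻¹ := sub_eq_zero.mp h
  have h2 : (q : Kq) * q = 1 := by
    nth_rewrite 2 [h1]; exact mul_inv_cancel₀ q_ne_zero
  have : (sqrtq : Kq) ^ 4 = 1 := by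
    calc (sqrtq:Kq)^4 = q * q := by ring
      _ = 1 := h2
  exact sqrtq_pow_ne_one (by norm_num) this

lemma qInt_succ_ne_zero (k : ℕ) : qInt (k + 1) ≠ 0 := by
  unfold qInt
  apply div_ne_zero _ q_sub_qinv_ne_zero
  rw [sub_ne_zero]
  intro h
  have h2 : (q : Kq) ^ (k+1) * q ^ (k+1) = 1 := by
    nth_rewrite 2 [h]
    rw [← mul_pow, mul_inv_cancel₀ q_ne_zero, one_pow]
  have : (sqrtq : Kq) ^ (4 * (k+1)) = 1 := by
    calc (sqrtq:Kq) ^ (4*(k+1)) = (q:Kq)^(k+1) * q^(k+1) := by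
          rw [q, ← pow_mul, ← pow_add]; ring_nf
      _ = 1 := h2
  exact sqrtq_pow_ne_one (by positivity) this

lemma qFac_ne_zero (k : ℕ) : qFac k ≠ 0 := by
  unfold qFac
  exact Finset.prod_ne_zero_iff.mpr fun i _ => qInt_succ_ne_zero i

/-- The weight factor in the bilinear form. -/
noncomputable def wt {n : ℕ} (m : Fin n → ℕ) : Kq :=
  q ^ (-(((∑ i, m i * (m i - 1)) / 2 : ℕ) : ℤ)) * (∏ i, qFac (m i))⁻¹

lemma wt_ne_zero {n : ℕ} (m : Fin n → ℕ) : wt m ≠ 0 := by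
  unfold wt
  exact mul_ne_zero (zpow_ne_zero _ q_ne_zero)
    (inv_ne_zero (Finset.prod_ne_zero_iff.mpr fun i _ => qFac_ne_zero _))

lemma bform_single {n : ℕ} (a : Fin n → ℕ) (c : Kq) (v' : W n) :
    bform (Finsupp.single a c) v' = c * v' a * wt a := by
  rw [bform, Finsupp.sum_single_index (by simp)]; rfl

lemma bform_zero {n : ℕ} (v' : W n) : bform 0 v' = 0 := by
  rw [bform, Finsupp.sum_zero_index]

lemma opOf_single {n : ℕ} (g : (Fin n → ℕ) → W n) (a : Fin n → ℕ) (c : Kq) :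
    opOf g (Finsupp.single a c) = c • g a := by
  rw [opOf]; exact Finsupp.sum_single_index (by simp)

lemma even_mul_pred (x : ℕ) : Even (x * (x - 1)) := by
  cases x with
  | zero => simp
  | succ k => simpa [mul_comm] using Nat.even_mul_succ_self k

lemma wt_update {n : ℕ} (ln : Fin n) (m' : Fin n → ℕ) :
    wt (Function.update m' ln (m' ln + 1)) =
      q ^ (-(m' ln : ℤ)) * (qInt (m' ln + 1))⁻¹ * wt m' := by
  set a := m' ln with ha
  -- sums
  have e1 : (∑ i, (Function.update m' ln (a+1)) i * ((Function.update m' ln (a+1)) i - 1)) =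
      (∑ i ∈ Finset.univ \ {ln}, m' i * (m' i - 1)) + (a+1) * a := by
    rw [Finset.sum_eq_sum_sdiff_singleton_add (Finset.mem_univ ln)]
    congr 1
    · refine Finset.sum_congr rfl fun i hi => ?_
      have : i ≠ ln := by simpa using (Finset.mem_sdiff.mp hi).2
      rw [Function.update_of_ne this]
    · rw [Function.update_self]; simp
  have e2 : (∑ i, m' i * (m' i - 1)) =
      (∑ i ∈ Finset.univ \ {ln}, m' i * (m' i - 1)) + a * (a - 1) := by
    rw [Finset.sum_eq_sum_sdiff_singleton_add (Finset.mem_univ ln)]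
  have hS : (∑ i, (Function.update m' ln (a+1)) i * ((Function.update m' ln (a+1)) i - 1)) =
      (∑ i, m' i * (m' i - 1)) + 2 * a := by
    rw [e1, e2]
    cases a with
    | zero => simp
    | succ k => simp [Nat.succ_sub_one]; ring
  have hev : Even (∑ i, m' i * (m' i - 1)) :=
    Finset.even_sum _ fun i _ => even_mul_pred (m' i)
  obtain ⟨t, ht⟩ := hev
  have d1 : (∑ i, (Function.update m' ln (a+1)) i * ((Function.update m' ln (a+1)) i - 1)) / 2
      = t + a := by omega
  have d2 : (∑ i, m' i * (m' i - 1)) / 2 = t := by omega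
  -- products
  have p1 : (∏ i, qFac ((Function.update m' ln (a+1)) i)) =
      qInt (a+1) * ∏ i, qFac (m' i) := by
    rw [Finset.prod_eq_prod_diff_singleton_mul (Finset.mem_univ ln),
        Finset.prod_eq_prod_diff_singleton_mul (Finset.mem_univ ln) (fun i => qFac (m' i))]
    have : (∏ i ∈ Finset.univ \ {ln}, qFac ((Function.update m' ln (a+1)) i)) =
        ∏ i ∈ Finset.univ \ {ln}, qFac (m' i) := by
      refine Finset.prod_congr rfl fun i hi => ?_
      have : i ≠ ln := by simpa using (Finset.mem_sdiff.mp hi).2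
      rw [Function.update_of_ne this]
    rw [this, Function.update_self]
    have : qFac (a + 1) = qFac a * qInt (a + 1) := Finset.prod_range_succ _ _
    rw [this]; ring
  unfold wt
  rw [d1, d2, p1]
  rw [show (-(↑(t + a) : ℤ)) = (-(t:ℤ)) + (-(a:ℤ)) by push_cast; ring,
      zpow_add₀ q_ne_zero, mul_inv]
  ring

lemma rvec {n : ℕ} (ln : Fin n) (m' : Fin n → ℕ) :
    (-sqrtq⁻¹) • kInvN ln (fN ln (ket m')) =
      Finsupp.single (Function.update m' ln (m' ln + 1))
        (-sqrtq⁻¹ * (sqrtq⁻¹ * qInt (m' ln + 1) * sqrtq ^ (2 * (m' ln + 1) + 1))) := by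
  simp only [fN, kInvN, ket, opOf_single, one_smul, Finsupp.smul_single, smul_eq_mul,
    mul_one, Function.update_self]

lemma main_aux {n : ℕ} (ln : Fin n) (m m' : Fin n → ℕ) :
    bform (eN ln (ket m)) (ket m') =
      bform (ket m) ((-sqrtq⁻¹) • kInvN ln (fN ln (ket m'))) := by
  set a := m' ln with ha
  set mp := Function.update m' ln (a + 1) with hmp
  have hmpln : mp ln = a + 1 := Function.update_self _ _ _
  rw [rvec, ket, bform_single, Finsupp.single_apply, one_mul, ← ha, ← hmp]
  -- compute the left-hand side
  rw [eN, ket, opOf_single, one_smul]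
  by_cases h0 : m ln = 0
  · rw [if_pos h0, bform_zero]
    have hne : mp ≠ m := by
      intro h
      rw [← h] at h0
      rw [hmpln] at h0
      omega
    rw [if_neg hne, zero_mul]
  · rw [if_neg h0]
    simp only [ket, Finsupp.smul_single, smul_eq_mul, mul_one]
    rw [bform_single, Finsupp.single_apply]
    set mm := Function.update m ln (m ln - 1) with hmm
    by_cases h : mp = m
    · -- true case
      have hma : m ln = a + 1 := by rw [← h, hmpln]
      have hmm' : m' = mm := by
        rw [hmm, ← h, hmp]
        funext i
        by_cases hi : i = ln
        · subst hi; simp [ha]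
        · simp [Function.update_of_ne hi]
      rw [if_pos hmm', if_pos h, mul_one, ← hmm', ← h, hmp, wt_update, ← ha]
      have hq : (q : Kq) ^ (-(a : ℤ)) = ((sqrtq : Kq) ^ (2 * a))⁻¹ := by
        rw [zpow_neg, zpow_natCast, q, ← pow_mul]
      rw [hq]
      have hI := qInt_succ_ne_zero a
      have hs := sqrtq_ne_zero
      field_simp
      ring
    · -- false case
      have hne2 : m' ≠ mm := by
        intro heq
        apply h
        rw [hmp, heq, hmm]
        funext i
        by_cases hi : i = ln
        · subst hi; simp
          have h3 : a = m i - 1 := by rw [ha, heq, hmm, Function.update_self]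
          omega
        · simp [Function.update_of_ne hi]
      rw [if_neg hne2, if_neg h]
      ring

/-- polarization at the odd node `n` for `U_q(C^{(2)}(n+1))`:
`(e_n v, v') = (v, -q^{-1/2} k_n^{-1} f_n v')` for all basis vectors `v, v'`. -/
theorem polarization_odd_node (n : ℕ) (hn : 0 < n) (m m' : Fin n → ℕ) :
    bform (eN ⟨n - 1, by omega⟩ (ket m)) (ket m') =
      bform (ket m)
        ((-sqrtq⁻¹) • kInvN ⟨n - 1, by omega⟩ (fN ⟨n - 1, by omega⟩ (ket m'))) := by
  exact main_aux _ m m'
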